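/- For every rooted tree t with n vertices, the number of increasing labellings of t equals n! divided by the product of the hook lengths of all vertices of t: #L(t) = n!/∏_{v∈t} h_v. -/

import Mathlib

/-- Rooted trees: a root together with a (possibly empty) list of subtrees. -/
inductive RTree : Type
  | node : List RTree → RTree

/-- The number of vertices of a rooted tree. -/
def RTree.size : RTree → ℕ
  | .node ts => 1 + (ts.attach.map (fun x => RTree.size x.1)).sum
decreasing_by simp only [RTree.node.sizeOf_spec]; have := List.sizeOf_lt_of_mem x.2; omega

/-- The product of the hook lengths of all vertices of a rooted tree, where the hook
length of a vertex is the number of its descendants (including itself). -/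
def RTree.hookProd : RTree → ℕ
  | .node ts => (RTree.node ts).size * (ts.attach.map (fun x => RTree.hookProd x.1)).prod
decreasing_by simp only [RTree.node.sizeOf_spec]; have := List.sizeOf_lt_of_mem x.2; omega

/-- Labelled rooted trees: every vertex carries a natural number label. -/
inductive LRTree : Type
  | node : ℕ → List LRTree → LRTree

/-- The underlying (unlabelled) shape of a labelled rooted tree. -/
def LRTree.shape : LRTree → RTree
  | .node _ ts => .node (ts.attach.map (fun x => LRTree.shape x.1))
decreasing_by simp only [LRTree.node.sizeOf_spec]; have := List.sizeOf_lt_of_mem x.2; omega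

/-- The multiset of labels of a labelled rooted tree. -/
def LRTree.labels : LRTree → Multiset ℕ
  | .node a ts => a ::ₘ (ts.attach.map (fun x => LRTree.labels x.1)).sum
decreasing_by simp only [LRTree.node.sizeOf_spec]; have := List.sizeOf_lt_of_mem x.2; omega

/-- A labelled rooted tree is increasing if the label of each vertex is smaller than
the labels of all its descendants. -/
inductive LRTree.Increasing : LRTree → Prop
  | node (a : ℕ) (ts : List LRTree) :
      (∀ t ∈ ts, ∀ b ∈ t.labels, a < b) →
      (∀ t ∈ ts, t.Increasing) →
      LRTree.Increasing (.node a ts)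


-- simp lemmas
theorem RTree.size_node (ts : List RTree) :
    (RTree.node ts).size = 1 + (ts.map RTree.size).sum := by
  rw [RTree.size]; congr 1
  rw [List.attach_map_val (f := RTree.size)]

theorem RTree.hookProd_node (ts : List RTree) :
    (RTree.node ts).hookProd = (RTree.node ts).size * (ts.map RTree.hookProd).prod := by
  rw [RTree.hookProd]; congr 1
  rw [List.attach_map_val (f := RTree.hookProd)]

theorem LRTree.shape_node (a : ℕ) (ts : List LRTree) :
    (LRTree.node a ts).shape = .node (ts.map LRTree.shape) := by
  rw [LRTree.shape]; congr 1
  rw [List.attach_map_val (f := LRTree.shape)]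

theorem LRTree.labels_node (a : ℕ) (ts : List LRTree) :
    (LRTree.node a ts).labels = a ::ₘ (ts.map LRTree.labels).sum := by
  rw [LRTree.labels]; congr 1
  rw [List.attach_map_val (f := LRTree.labels)]

theorem card_listSum (L : List (Multiset ℕ)) :
    Multiset.card L.sum = (L.map (fun m => Multiset.card m)).sum := by
  induction L with
  | nil => simp
  | cons h t ih => simp [ih]

theorem LRTree.labels_card : ∀ (l : LRTree), Multiset.card l.labels = l.shape.size
  | .node a ts => by
    rw [LRTree.labels_node, LRTree.shape_node, RTree.size_node]
    simp only [Multiset.card_cons, List.map_map, card_listSum]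
    have : ts.map ((fun m => Multiset.card m) ∘ LRTree.labels)
        = ts.map (RTree.size ∘ LRTree.shape) :=
      List.map_congr_left (fun x hx => LRTree.labels_card x)
    rw [this]; omega

noncomputable instance : DecidableEq LRTree := Classical.decEq _

mutual
noncomputable def labellings : RTree → Finset ℕ → Finset LRTree
  | .node ts, S =>
    if h : S.Nonempty then
      (partLabellings ts (S.erase (S.min' h))).image (fun ls => LRTree.node (S.min' h) ls)
    else ∅

noncomputable def partLabellings : List RTree → Finset ℕ → Finset (List LRTree)
  | [], S => if S = ∅ then {[]} else ∅
  | t :: ts, S =>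
      (S.powersetCard t.size).biUnion
        (fun A => ((labellings t A) ×ˢ (partLabellings ts (S \ A))).image (fun p => p.1 :: p.2))
end

theorem mem_listSum {b : ℕ} (L : List (Multiset ℕ)) :
    b ∈ L.sum ↔ ∃ m ∈ L, b ∈ m := by
  induction L with
  | nil => simp
  | cons h t ih => simp [ih]

mutual
theorem mem_labellings : ∀ (t : RTree) (S : Finset ℕ) (l : LRTree),
    l ∈ labellings t S ↔ (l.shape = t ∧ l.labels = S.val ∧ l.Increasing)
  | .node ts, S, l => by
    rw [labellings]
    split_ifs with h
    · simp only [Finset.mem_image]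
      constructor
      · rintro ⟨ls, hls, rfl⟩
        obtain ⟨hsh, hlab, hinc⟩ := (mem_partLabellings ts _ ls).1 hls
        have hm : S.min' h ∈ S := S.min'_mem h
        refine ⟨by rw [LRTree.shape_node, hsh], ?_, ?_⟩
        · rw [LRTree.labels_node, hlab, Finset.erase_val, Multiset.cons_erase]
          exact hm
        · refine LRTree.Increasing.node _ _ (fun l' hl' b hb => ?_) hinc
          have hb2 : b ∈ (ls.map LRTree.labels).sum :=
            (mem_listSum _).2 ⟨l'.labels, List.mem_map_of_mem hl', hb⟩
          rw [hlab] at hb2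
          exact S.min'_lt_of_mem_erase_min' h (Finset.mem_def.2 hb2)
      · rintro ⟨hsh, hlab, hinc⟩
        obtain ⟨a, ls⟩ := l
        rw [LRTree.shape_node] at hsh
        injection hsh with hsh
        rw [LRTree.labels_node] at hlab
        cases hinc with
        | node _ _ hlt hinc' =>
        have haS : a ∈ S := by
          rw [← Finset.mem_val, ← hlab]; exact Multiset.mem_cons_self _ _
        have hamin : a = S.min' h := by
          refine le_antisymm ?_ (S.min'_le a haS)
          have hm : S.min' h ∈ (a ::ₘ (ls.map LRTree.labels).sum) := by
            rw [hlab]; exact Finset.mem_def.1 (S.min'_mem h)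
          rcases Multiset.mem_cons.1 hm with h1 | h2
          · omega
          · obtain ⟨m, hm1, hm2⟩ := (mem_listSum _).1 h2
            obtain ⟨l', hl', rfl⟩ := List.mem_map.1 hm1
            exact le_of_lt (hlt l' hl' _ hm2)
        refine ⟨ls, (mem_partLabellings ts _ ls).2 ⟨hsh, ?_, hinc'⟩, by rw [← hamin]⟩
        rw [Finset.erase_val, ← hamin, ← hlab, Multiset.erase_cons_head]
    · simp only [Finset.notMem_empty, false_iff]
      rintro ⟨hsh, hlab, -⟩
      have h0 : S = ∅ := Finset.not_nonempty_iff_eq_empty.1 h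
      have := LRTree.labels_card l
      rw [hlab, hsh, RTree.size_node, h0] at this
      simp only [Finset.empty_val, Multiset.card_zero] at this
      omega

theorem mem_partLabellings : ∀ (ts : List RTree) (S : Finset ℕ) (ls : List LRTree),
    ls ∈ partLabellings ts S ↔
      (ls.map LRTree.shape = ts ∧ (ls.map LRTree.labels).sum = S.val ∧
        ∀ l ∈ ls, l.Increasing)
  | [], S, ls => by
    rw [partLabellings]
    split_ifs with h
    · subst h
      simp only [Finset.mem_singleton]
      constructor
      · rintro rfl; simp
      · rintro ⟨h1, -, -⟩
        exact List.map_eq_nil_iff.1 h1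
    · simp only [Finset.notMem_empty, false_iff]
      rintro ⟨h1, h2, -⟩
      rw [List.map_eq_nil_iff.1 h1] at h2
      simp only [List.map_nil, List.sum_nil] at h2
      exact h (Finset.val_eq_zero.1 h2.symm)
  | t :: ts, S, ls => by
    rw [partLabellings]
    simp only [Finset.mem_biUnion, Finset.mem_image, Finset.mem_product, Prod.exists]
    constructor
    · rintro ⟨A, hA, ⟨l, ls', ⟨hl, hls'⟩, rfl⟩⟩
      obtain ⟨hAsub, hAcard⟩ := Finset.mem_powersetCard.1 hA
      obtain ⟨hsh1, hlab1, hinc1⟩ := (mem_labellings t A l).1 hl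
      obtain ⟨hsh2, hlab2, hinc2⟩ := (mem_partLabellings ts _ ls').1 hls'
      refine ⟨by simp [hsh1, hsh2], ?_, ?_⟩
      · simp only [List.map_cons, List.sum_cons, hlab1, hlab2, Finset.sdiff_val]
        exact add_tsub_cancel_of_le (Finset.val_le_iff.2 hAsub)
      · intro l' hl'
        rcases List.mem_cons.1 hl' with rfl | hmem
        · exact hinc1
        · exact hinc2 _ hmem
    · rintro ⟨hsh, hlab, hinc⟩
      obtain ⟨l, ls', rfl⟩ : ∃ l ls', ls = l :: ls' := by
        cases ls with
        | nil => simp at hsh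
        | cons x xs => exact ⟨x, xs, rfl⟩
      simp only [List.map_cons, List.sum_cons] at hsh hlab
      injection hsh with hsh1 hsh2
      have hle : l.labels ≤ S.val := by
        rw [← hlab]; exact le_add_right (le_refl _)
      have hnd : l.labels.Nodup := Multiset.nodup_of_le hle S.nodup
      refine ⟨⟨l.labels, hnd⟩, ?_, l, ls', ⟨?_, ?_⟩, rfl⟩
      · refine Finset.mem_powersetCard.2 ⟨Finset.val_le_iff.1 hle, ?_⟩
        show Multiset.card l.labels = t.size
        rw [LRTree.labels_card, hsh1]
      · exact (mem_labellings t _ l).2 ⟨hsh1, rfl, hinc _ (by simp)⟩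
      · refine (mem_partLabellings ts _ ls').2 ⟨hsh2, ?_, fun l' h => hinc _ (by simp [h])⟩
        rw [Finset.sdiff_val, ← hlab]
        show (ls'.map LRTree.labels).sum = (l.labels + _) - l.labels
        rw [add_tsub_cancel_left]
end

mutual
theorem card_labellings : ∀ (t : RTree) (S : Finset ℕ), S.card = t.size →
    (labellings t S).card * t.hookProd = Nat.factorial t.size
  | .node ts, S, hcard => by
    have hsz : (RTree.node ts).size = 1 + (ts.map RTree.size).sum := RTree.size_node ts
    have hpos : 0 < S.card := by omega
    have hne : S.Nonempty := Finset.card_pos.1 hpos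
    rw [labellings, dif_pos hne]
    rw [Finset.card_image_of_injective _ (fun a b hab => by injection hab)]
    have hec : (S.erase (S.min' hne)).card = (ts.map RTree.size).sum := by
      rw [Finset.card_erase_of_mem (S.min'_mem hne)]; omega
    have hrec := card_partLabellings ts (S.erase (S.min' hne)) hec
    rw [hec] at hrec
    rw [RTree.hookProd_node, hsz]
    rw [show 1 + (ts.map RTree.size).sum = (ts.map RTree.size).sum + 1 by omega,
      Nat.factorial_succ]
    have hring : (partLabellings ts (S.erase (S.min' hne))).card *
        (((ts.map RTree.size).sum + 1) * (ts.map RTree.hookProd).prod) =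
        ((ts.map RTree.size).sum + 1) *
        ((partLabellings ts (S.erase (S.min' hne))).card * (ts.map RTree.hookProd).prod) := by
      ring
    rw [hring, hrec]

theorem card_partLabellings : ∀ (ts : List RTree) (S : Finset ℕ),
    S.card = (ts.map RTree.size).sum →
    (partLabellings ts S).card * (ts.map RTree.hookProd).prod = Nat.factorial S.card
  | [], S, hcard => by
    have : S = ∅ := Finset.card_eq_zero.1 (by simpa using hcard)
    rw [partLabellings, if_pos this, hcard]
    simp
  | t :: ts, S, hcard => by
    simp only [List.map_cons, List.sum_cons] at hcard
    rw [partLabellings]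
    have hdisj : (S.powersetCard t.size : Set (Finset ℕ)).PairwiseDisjoint
        (fun A => ((labellings t A) ×ˢ (partLabellings ts (S \ A))).image
          (fun p => p.1 :: p.2)) := by
      intro A hA B hB hAB
      refine Finset.disjoint_left.2 (fun x hxA hxB => hAB ?_)
      obtain ⟨⟨l, ls⟩, hmem, rfl⟩ := Finset.mem_image.1 hxA
      obtain ⟨⟨l', ls'⟩, hmem', heq⟩ := Finset.mem_image.1 hxB
      injection heq with e1 e2
      have h1 := ((mem_labellings t A l).1 (Finset.mem_product.1 hmem).1).2.1
      have h2 := ((mem_labellings t B l').1 (Finset.mem_product.1 hmem').1).2.1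
      rw [show l' = l from e1, h1] at h2
      exact Finset.val_injective h2
    rw [Finset.card_biUnion hdisj]
    have hterm : ∀ A ∈ S.powersetCard t.size,
        (((labellings t A) ×ˢ (partLabellings ts (S \ A))).image
          (fun p : LRTree × List LRTree => p.1 :: p.2)).card *
          ((t :: ts).map RTree.hookProd).prod
          = Nat.factorial t.size * Nat.factorial (ts.map RTree.size).sum := by
      intro A hA
      obtain ⟨hsub, hAcard⟩ := Finset.mem_powersetCard.1 hA
      rw [Finset.card_image_of_injective _
        (fun (a b : LRTree × List LRTree) hab => by
          injection hab with e1 e2; exact Prod.ext e1 e2)]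
      rw [Finset.card_product, List.map_cons, List.prod_cons]
      have h1 := card_labellings t A hAcard
      have hsd : (S \ A).card = (ts.map RTree.size).sum := by
        rw [Finset.card_sdiff_of_subset hsub]; omega
      have h2 := card_partLabellings ts (S \ A) hsd
      rw [hsd] at h2
      calc (labellings t A).card * (partLabellings ts (S \ A)).card *
            (t.hookProd * (ts.map RTree.hookProd).prod)
          = ((labellings t A).card * t.hookProd) *
            ((partLabellings ts (S \ A)).card * (ts.map RTree.hookProd).prod) := by ring
        _ = _ := by rw [h1, h2]
    rw [Finset.sum_mul, Finset.sum_congr rfl hterm, Finset.sum_const, smul_eq_mul,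
      Finset.card_powersetCard]
    rw [← mul_assoc, show (ts.map RTree.size).sum = S.card - t.size by omega,
      Nat.choose_mul_factorial_mul_factorial (by omega : t.size ≤ S.card)]
end

/-- Hook length formula: for every rooted tree `t` with `n` vertices, the number of
increasing labellings of `t` by `{1, …, n}` equals `n !` divided by the product of the
hook lengths of its vertices. -/theorem hook_length_formula (t : RTree) :
    {l : LRTree | l.shape = t ∧
        l.labels = Multiset.map (· + 1) (Multiset.range t.size) ∧
        l.Increasing}.ncard * t.hookProd = Nat.factorial t.size := by
  set S : Finset ℕ := (Finset.range t.size).map ⟨(· + 1), add_left_injective 1⟩ with hS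
  have hval : S.val = Multiset.map (· + 1) (Multiset.range t.size) := by
    rw [hS, Finset.map_val, Finset.range_val]; rfl
  have hsetsEq : {l : LRTree | l.shape = t ∧
        l.labels = Multiset.map (· + 1) (Multiset.range t.size) ∧
        l.Increasing} = ↑(labellings t S) := by
    ext l
    simp only [Set.mem_setOf_eq, Finset.coe_sort_coe, Finset.mem_coe,
      mem_labellings, hval]
  rw [hsetsEq, Set.ncard_coe_finset]
  exact card_labellings t S (by rw [hS, Finset.card_map, Finset.card_range])
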